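/- Let l and k be natural numbers with k ≤ 2^l. Let μ_F be the uniform probability distribution on all functions Fin k → Fin (2^l) and μ_P the uniform probability distribution on the (nonempty) finite set of injective functions Fin k → Fin (2^l). Then for every set S of functions Fin k → Fin (2^l), |μ_F(S) − μ_P(S)| ≤ k·(k+1)/2^{l+1}. (This is the non-adaptive instance of the PRF/PRP Switching Lemma proved in the paper: the statistical distance between k answers of a random function and k answers of a random permutation on l-bit strings is at most k(k+1)/2^{l+1}.) -/

import Mathlib

open scoped ENNReal NNReal
lemma core_nat (N k : ℕ) : 2*N*N^k ≤ k*(k+1)*N^k + 2*N*(N.descFactorial k) := by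
  induction k with
  | zero => simp
  | succ k ih =>
    rcases le_or_gt N k with hk | hk
    · have h1 : 2*N ≤ (k+1)*((k+1)+1) := by nlinarith
      have h2 : 2*N*N^(k+1) ≤ (k+1)*((k+1)+1)*N^(k+1) :=
        Nat.mul_le_mul_right _ h1
      omega
    · have hd : N.descFactorial k ≤ N^k := Nat.descFactorial_le_pow N k
      have hds : N.descFactorial (k+1) = (N - k) * N.descFactorial k :=
        Nat.descFactorial_succ N k
      have hp : N^(k+1) = N * N^k := pow_succ' N k
      rw [hds, hp]
      obtain ⟨c, hc⟩ : ∃ c, N = k + c := ⟨N - k, by omega⟩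
      have hnk : N - k = c := by omega
      rw [hnk]
      set X := N^k with hX
      set d := N.descFactorial k with hd'
      subst hc
      nlinarith [Nat.mul_le_mul_left (k+c) ih, Nat.mul_le_mul_left (2*(k+c)*k) hd]

lemma ennreal_aux (a n m p K D : ℕ) (hn : 0 < n) (hp : 0 < p) (hD : 0 < D)
    (hkey : a * (p * D) ≤ (m * D + K * p) * n) :
    (a : ℝ≥0∞) / n ≤ (m : ℝ≥0∞) / p + (K : ℝ≥0∞) / D := by
  have hfin : ∀ x y : ℕ, 0 < y → ((x : ℝ≥0∞) / y) ≠ ⊤ := fun x y hy =>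
    (ENNReal.div_lt_top (ENNReal.natCast_ne_top x) (by exact_mod_cast hy.ne')).ne
  rw [← ENNReal.toReal_le_toReal (hfin a n hn) (by
    exact ENNReal.add_ne_top.mpr ⟨hfin m p hp, hfin K D hD⟩)]
  rw [ENNReal.toReal_add (hfin m p hp) (hfin K D hD)]
  simp only [ENNReal.toReal_div, ENNReal.toReal_natCast]
  have hn0 : (0:ℝ) < n := by exact_mod_cast hn
  have hp0 : (0:ℝ) < p := by exact_mod_cast hp
  have hD0 : (0:ℝ) < D := by exact_mod_cast hD
  rw [div_add_div _ _ hp0.ne' hD0.ne', div_le_div_iff₀ hn0 (by positivity)]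
  have := (Nat.cast_le (α := ℝ)).mpr hkey
  push_cast at this ⊢
  nlinarith [this]



/-- Non-adaptive instance of the PRF/PRP Switching Lemma: the statistical distance
between `k` answers of a uniformly random function `Fin k → Fin (2^l)` and `k` answers
of a uniformly random injective function (random permutation restricted to the queries)
is at most `k(k+1)/2^(l+1)`. -/
theorem prf_prp_switching_lemma (l k : ℕ) (h : k ≤ 2 ^ l)
    (S : Set (Fin k → Fin (2 ^ l))) :
    (PMF.uniformOfFintype (Fin k → Fin (2 ^ l))).toOuterMeasure S ≤
      (PMF.uniformOfFinset
          (Finset.univ.filter fun f : Fin k → Fin (2 ^ l) => Function.Injective f)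
          ⟨Fin.castLE h, Finset.mem_filter.mpr
            ⟨Finset.mem_univ _, Fin.castLE_injective h⟩⟩).toOuterMeasure S
        + ((k : ENNReal) * (k + 1)) / 2 ^ (l + 1) ∧
    (PMF.uniformOfFinset
        (Finset.univ.filter fun f : Fin k → Fin (2 ^ l) => Function.Injective f)
        ⟨Fin.castLE h, Finset.mem_filter.mpr
          ⟨Finset.mem_univ _, Fin.castLE_injective h⟩⟩).toOuterMeasure S ≤
      (PMF.uniformOfFintype (Fin k → Fin (2 ^ l))).toOuterMeasure S
        + ((k : ENNReal) * (k + 1)) / 2 ^ (l + 1) := by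
  classical
  set Inj : Finset (Fin k → Fin (2 ^ l)) :=
    Finset.univ.filter fun f : Fin k → Fin (2 ^ l) => Function.Injective f with hInjDef
  have huniv : PMF.uniformOfFintype (Fin k → Fin (2 ^ l)) =
      PMF.uniformOfFinset Finset.univ Finset.univ_nonempty := rfl
  rw [huniv]
  rw [PMF.toOuterMeasure_uniformOfFinset_apply]
  erw [PMF.toOuterMeasure_uniformOfFinset_apply]
  set a := ((Finset.univ : Finset (Fin k → Fin (2 ^ l))).filter (· ∈ S)).card with ha
  set m := (Inj.filter (· ∈ S)).card with hm
  set n := (Finset.univ : Finset (Fin k → Fin (2 ^ l))).card with hn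
  set p := Inj.card with hp
  have hNpos : 0 < 2 ^ l := Nat.pow_pos (by norm_num)
  have hncard : n = (2 ^ l) ^ k := by
    rw [hn, Finset.card_univ, Fintype.card_fun, Fintype.card_fin, Fintype.card_fin]
  have hpcard : p = (2 ^ l).descFactorial k := by
    rw [hp, hInjDef, ← Fintype.card_subtype]
    rw [Fintype.card_congr (Equiv.subtypeInjectiveEquivEmbedding (Fin k) (Fin (2 ^ l)))]
    rw [Fintype.card_embedding_eq, Fintype.card_fin, Fintype.card_fin]
  have hnpos : 0 < n := by rw [hncard]; positivity
  have hppos : 0 < p :=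
    Finset.card_pos.mpr ⟨Fin.castLE h, Finset.mem_filter.mpr
      ⟨Finset.mem_univ _, Fin.castLE_injective h⟩⟩
  have hple : p ≤ n := Finset.card_le_card (Finset.filter_subset _ _)
  obtain ⟨q, hq⟩ : ∃ q, n = p + q := ⟨n - p, by omega⟩
  have hmlea : m ≤ a := Finset.card_le_card
    (Finset.filter_subset_filter _ (Finset.filter_subset _ _))
  have hmlep : m ≤ p := Finset.card_le_card (Finset.filter_subset _ _)
  have halem : a ≤ m + q := by
    have hsub : (Finset.univ : Finset (Fin k → Fin (2 ^ l))).filter (· ∈ S) ⊆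
        (Inj.filter (· ∈ S)) ∪ (Finset.univ \ Inj) := by
      intro x hx
      rcases Finset.mem_filter.mp hx with ⟨-, hxS⟩
      by_cases hinj : Function.Injective x
      · exact Finset.mem_union_left _ (Finset.mem_filter.mpr
          ⟨Finset.mem_filter.mpr ⟨Finset.mem_univ _, hinj⟩, hxS⟩)
      · exact Finset.mem_union_right _ (Finset.mem_sdiff.mpr
          ⟨Finset.mem_univ _, fun hc => hinj (Finset.mem_filter.mp hc).2⟩)
    have h1 : a ≤ m + (Finset.univ \ Inj).card :=
      (Finset.card_le_card hsub).trans (Finset.card_union_le _ _)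
    have h2 : (Finset.univ \ Inj).card = n - p := by
      rw [Finset.card_sdiff_of_subset (Finset.subset_univ _)]
    omega
  -- the key counting inequality
  have hcore : 2 * 2 ^ l * q ≤ k * (k + 1) * n := by
    have hc := core_nat (2 ^ l) k
    rw [← hncard, ← hpcard] at hc
    nth_rewrite 1 [hq] at hc
    rw [Nat.mul_add] at hc
    omega
  have hKD : ((k : ℝ≥0∞) * (k + 1)) / 2 ^ (l + 1) =
      ((k * (k+1) : ℕ) : ℝ≥0∞) / ((2 ^ (l+1) : ℕ) : ℝ≥0∞) := by
    push_cast
    ring_nf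
  have hDpos : 0 < 2 ^ (l + 1) := Nat.pow_pos (by norm_num)
  have hD2 : (2 : ℕ) ^ (l + 1) = 2 * 2 ^ l := by ring
  have hcore2 : 2 * 2 ^ l * q ≤ k * (k + 1) * (p + q) := hq ▸ hcore
  constructor
  · rw [hKD]
    refine ennreal_aux a n m p (k * (k+1)) (2 ^ (l+1)) hnpos hppos hDpos ?_
    rw [hD2, hq]
    calc a * (p * (2 * 2 ^ l)) ≤ (m + q) * (p * (2 * 2 ^ l)) :=
          Nat.mul_le_mul_right _ halem
      _ = m * (2 * 2 ^ l) * p + p * (2 * 2 ^ l * q) := by ring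
      _ ≤ m * (2 * 2 ^ l) * p + p * (k * (k + 1) * (p + q)) :=
          Nat.add_le_add_left (Nat.mul_le_mul_left p hcore2) _
      _ ≤ (m * (2 * 2 ^ l) + k * (k + 1) * p) * (p + q) := by
          have : (m * (2 * 2 ^ l) + k * (k + 1) * p) * (p + q) =
              m * (2 * 2 ^ l) * p + p * (k * (k + 1) * (p + q)) + m * (2 * 2 ^ l) * q := by
            ring
          omega
  · rw [hKD]
    refine ennreal_aux m p a n (k * (k+1)) (2 ^ (l+1)) hppos hnpos hDpos ?_
    rw [hD2, hq]
    nlinarith [Nat.mul_le_mul_right (p * (2 * 2 ^ l)) hmlea,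
      Nat.mul_le_mul_left p hcore2,
      Nat.mul_le_mul_right (q * (2 * 2 ^ l)) hmlep]
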